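/- Let μ be a probability measure on [0,∞) with finite first and second moments m₁ = ∫ t dμ(t) and m₂ = ∫ t² dμ(t); let ν̌ be a probability measure on [0,∞); let γ > 0 and z ∈ ℂ⁺. Set l = −1/g_ν̌(z), which is well defined with Im(l) > 0 since Im(g_ν̌(z)) > 0. Assume that l satisfies the self-consistent equation l = z + γ·l + γ·l²·g_μ(l). Then: (a) Im(l/z) ≥ 0; (b) Im(z) ≤ Im(l) ≤ Im(z)/2 + √(γ·m₂ + Im(z)²/4); (c) |l| ≤ |z| + γ·m₁·|z|/Im(z). -/

import Mathlib

open MeasureTheory ProbabilityTheory Filter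
open scoped NNReal

/-- Stieltjes transform `g_μ(z) = ∫ (t − z)⁻¹ dμ(t)` of a measure on `ℝ`. -/
noncomputable def stieltjesT (μ : Measure ℝ) (z : ℂ) : ℂ := ∫ t, ((t : ℂ) - z)⁻¹ ∂μ

lemma integral_cim {α : Type*} {m : MeasurableSpace α} {μ : Measure α} {f : α → ℂ}
    (hf : Integrable f μ) : (∫ x, f x ∂μ).im = ∫ x, (f x).im ∂μ := by
  have := (Complex.imCLM.integral_comp_comm hf).symm
  simpa using this

lemma integrable_cim {α : Type*} {m : MeasurableSpace α} {μ : Measure α} {f : α → ℂ}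
    (hf : Integrable f μ) : Integrable (fun x => (f x).im) μ := hf.im

lemma integrable_inv_sub (ν : Measure ℝ) [IsFiniteMeasure ν] {w : ℂ} (hw : w.im ≠ 0) :
    Integrable (fun t : ℝ => ((t : ℂ) - w)⁻¹) ν := by
  have hne : ∀ t : ℝ, (t : ℂ) - w ≠ 0 := by
    intro t h
    apply hw
    have := congrArg Complex.im h
    simpa using this
  have hcont : Continuous (fun t : ℝ => ((t : ℂ) - w)⁻¹) :=
    (Complex.continuous_ofReal.sub continuous_const).inv₀ hne
  refine (integrable_const |w.im|⁻¹).mono' hcont.aestronglyMeasurable ?_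
  refine Filter.Eventually.of_forall fun t => ?_
  rw [norm_inv]
  refine inv_anti₀ (abs_pos.mpr hw) ?_
  calc |w.im| = |((t:ℂ) - w).im| := by simp
  _ ≤ ‖(t:ℂ) - w‖ := Complex.abs_im_le_norm _
  _ = ‖(t:ℂ) - w‖ := rfl

lemma key_geom {z l : ℂ} (hz : 0 < z.im) (hli : 0 < l.im)
    (hq : 0 ≤ l.im * z.re - l.re * z.im) {t : ℝ} (ht : 0 ≤ t) :
    ‖l‖ * z.im ≤ ‖z‖ * ‖(t : ℂ) - l‖ := by
  have hsq : (‖l‖ * z.im) ^ 2 ≤ (‖z‖ * ‖(t:ℂ) - l‖) ^ 2 := by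
    rw [mul_pow, mul_pow, Complex.sq_norm, Complex.sq_norm, Complex.sq_norm]
    simp only [Complex.normSq_apply, Complex.sub_re, Complex.sub_im, Complex.ofReal_re,
      Complex.ofReal_im]
    rcases le_or_gt l.re 0 with h | h
    · nlinarith [mul_nonneg ht (neg_nonneg.2 h), sq_nonneg (z.re * t), sq_nonneg (z.im * t),
        sq_nonneg (z.re * l.re), sq_nonneg (z.re * l.im),
        mul_nonneg (mul_nonneg ht (neg_nonneg.2 h)) (sq_nonneg z.re),
        mul_nonneg (mul_nonneg ht (neg_nonneg.2 h)) (sq_nonneg z.im)]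
    · have hzr : 0 < z.re := by nlinarith
      nlinarith [sq_nonneg (t - l.re), mul_nonneg hq (le_of_lt (by positivity : (0:ℝ) < l.im * z.re + l.re * z.im)),
        mul_nonneg (sq_nonneg (t - l.re)) (sq_nonneg z.re),
        mul_nonneg (sq_nonneg (t - l.re)) (sq_nonneg z.im)]
  have h1 : 0 ≤ ‖l‖ * z.im := mul_nonneg (norm_nonneg _) hz.le
  have h2 : 0 ≤ ‖z‖ * ‖(t:ℂ) - l‖ :=
    mul_nonneg (norm_nonneg _) (norm_nonneg _)
  calc ‖l‖ * z.im = Real.sqrt ((‖l‖ * z.im) ^ 2) := (Real.sqrt_sq h1).symm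
  _ ≤ Real.sqrt ((‖z‖ * ‖(t:ℂ) - l‖) ^ 2) := Real.sqrt_le_sqrt hsq
  _ = _ := Real.sqrt_sq h2

lemma quad_bound {a b c : ℝ} (ha : 0 < a) (h : a ≤ b + c / a) :
    a ≤ b / 2 + Real.sqrt (c + b ^ 2 / 4) := by
  have h2 : a * a - a * b ≤ c := by
    have := (le_div_iff₀ ha).mp (by linarith : a - b ≤ c / a)
    nlinarith
  have h3 : (a - b / 2) ^ 2 ≤ c + b ^ 2 / 4 := by nlinarith
  have h4 : a - b / 2 ≤ Real.sqrt (c + b ^ 2 / 4) := by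
    calc a - b / 2 ≤ |a - b / 2| := le_abs_self _
    _ = Real.sqrt ((a - b / 2) ^ 2) := (Real.sqrt_sq_eq_abs _).symm
    _ ≤ _ := Real.sqrt_le_sqrt h3
  linarith

theorem stmt_11 (μ ν : Measure ℝ) [IsProbabilityMeasure μ] [IsProbabilityMeasure ν]
    (hμs : μ (Set.Iio 0) = 0) (hνs : ν (Set.Iio 0) = 0)
    (hm1 : Integrable (fun t => t) μ) (hm2 : Integrable (fun t => t ^ 2) μ)
    (γ : ℝ) (hγ : 0 < γ) (z : ℂ) (hz : 0 < z.im)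
    (l : ℂ) (hl : l = -1 / stieltjesT ν z)
    (heq : l = z + γ * l + γ * l ^ 2 * stieltjesT μ l) :
    0 ≤ (l / z).im ∧
    (z.im ≤ l.im ∧
      l.im ≤ z.im / 2 + Real.sqrt (γ * (∫ t, t ^ 2 ∂μ) + z.im ^ 2 / 4)) ∧
    ‖l‖ ≤ ‖z‖ + γ * (∫ t, t ∂μ) * ‖z‖ / z.im := by
  have hzim : z.im ≠ 0 := ne_of_gt hz
  have hz0 : z ≠ 0 := fun h => hzim (by simp [h])
  set g := stieltjesT ν z with hg
  have hνint : Integrable (fun t : ℝ => ((t : ℂ) - z)⁻¹) ν := integrable_inv_sub ν hzim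
  -- Im g > 0
  have hgim : 0 < g.im := by
    have h1 : g.im = ∫ t, (((t : ℂ) - z)⁻¹).im ∂ν := integral_cim hνint
    have h2 : ∀ t : ℝ, (((t : ℂ) - z)⁻¹).im = z.im / Complex.normSq ((t:ℂ) - z) := by
      intro t
      rw [Complex.inv_im]
      simp [neg_div]
    rw [h1]
    simp_rw [h2]
    have hpos : ∀ t : ℝ, 0 < z.im / Complex.normSq ((t:ℂ) - z) := by
      intro t
      apply div_pos hz
      rw [Complex.normSq_pos]
      intro h
      apply hzim
      have := congrArg Complex.im h
      simpa using this
    have hint : Integrable (fun t : ℝ => z.im / Complex.normSq ((t:ℂ) - z)) ν := by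
      have := integrable_cim hνint
      simp_rw [h2] at this
      exact this
    rw [integral_pos_iff_support_of_nonneg (fun t => (hpos t).le) hint]
    have : Function.support (fun t : ℝ => z.im / Complex.normSq ((t:ℂ) - z)) = Set.univ := by
      ext t; simpa using (hpos t).ne'
    rw [this]
    simp
  have hgne : g ≠ 0 := fun h => by simp [h] at hgim
  -- Im l > 0
  have hlim : 0 < l.im := by
    rw [hl, neg_div, one_div, Complex.neg_im, Complex.inv_im]
    rw [neg_div, neg_neg]
    exact div_pos hgim (Complex.normSq_pos.mpr hgne)
  -- part (a)
  have hwim : 0 ≤ (z * g).im := by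
    have h1 : z * g = ∫ t, z * ((t : ℂ) - z)⁻¹ ∂ν := by
      rw [hg, stieltjesT, integral_const_mul]
    have h2 : (z * g).im = ∫ t, (z * ((t : ℂ) - z)⁻¹).im ∂ν := by
      rw [h1]; exact integral_cim (hνint.const_mul z)
    rw [h2]
    apply integral_nonneg_of_ae
    have hae : ∀ᵐ t ∂ν, 0 ≤ t := by
      rw [ae_iff]
      convert hνs using 2
      ext t; simp [Set.Iio]
    filter_upwards [hae] with t ht
    have hN : 0 < Complex.normSq ((t:ℂ) - z) := by
      rw [Complex.normSq_pos]
      intro h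
      apply hzim
      have := congrArg Complex.im h
      simpa using this
    have : (z * ((t : ℂ) - z)⁻¹).im = t * z.im / Complex.normSq ((t:ℂ) - z) := by
      rw [Complex.mul_im, Complex.inv_re, Complex.inv_im]
      simp only [Complex.sub_re, Complex.sub_im, Complex.ofReal_re, Complex.ofReal_im]
      field_simp
      ring
    rw [this]
    positivity
  have ha : 0 ≤ (l / z).im := by
    have hlz : l / z = -((z * g)⁻¹) := by
      rw [hl]
      field_simp
    rw [hlz, Complex.neg_im, Complex.inv_im, neg_div, neg_neg]
    exact div_nonneg hwim (Complex.normSq_nonneg _)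
  -- setup at l
  have hlim' : l.im ≠ 0 := ne_of_gt hlim
  have hne : ∀ t : ℝ, (t : ℂ) - l ≠ 0 := by
    intro t h
    apply hlim'
    have := congrArg Complex.im h
    simpa using this
  have hNpos : ∀ t : ℝ, 0 < Complex.normSq ((t:ℂ) - l) :=
    fun t => Complex.normSq_pos.mpr (hne t)
  have hμinv : Integrable (fun t : ℝ => ((t : ℂ) - l)⁻¹) μ := integrable_inv_sub μ hlim'
  -- integrability of h t = l * t / (t - l)
  have hH : Integrable (fun t : ℝ => l * t / ((t : ℂ) - l)) μ := by
    have hcont : Continuous (fun t : ℝ => l * t / ((t : ℂ) - l)) := by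
      apply Continuous.div
      · exact continuous_const.mul Complex.continuous_ofReal
      · exact Complex.continuous_ofReal.sub continuous_const
      · exact hne
    refine (hm1.abs.const_mul (‖l‖ / l.im)).mono' hcont.aestronglyMeasurable ?_
    refine Filter.Eventually.of_forall fun t => ?_
    rw [norm_div, norm_mul]
    have h1 : ‖(t:ℂ) - l‖ ≥ l.im := by
      calc l.im = |((t:ℂ) - l).im| := by
            rw [Complex.sub_im, Complex.ofReal_im, zero_sub, abs_neg, abs_of_nonneg hlim.le]
      _ ≤ ‖(t:ℂ) - l‖ := Complex.abs_im_le_norm _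
    calc ‖l‖ * ‖(t:ℂ)‖ / ‖(t:ℂ) - l‖ ≤ ‖l‖ * ‖(t:ℂ)‖ / l.im := by
          gcongr <;> first | positivity | exact hlim | exact h1
    _ = ‖l‖ / l.im * |t| := by
          rw [Complex.norm_real]
          simp only [Real.norm_eq_abs]
          ring
  -- the equation l = z + γ ∫ h
  have heq2 : l = z + γ * ∫ t, l * t / ((t : ℂ) - l) ∂μ := by
    have hpt : (fun t : ℝ => l * t / ((t : ℂ) - l)) =
        fun t : ℝ => l + l ^ 2 * ((t : ℂ) - l)⁻¹ := by
      funext t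
      field_simp [hne t]
      ring
    rw [hpt, integral_add (integrable_const l) (hμinv.const_mul _), integral_const,
      integral_const_mul]
    simp only [probReal_univ, one_smul]
    rw [← stieltjesT]
    linear_combination heq
  -- imaginary part of h
  have him : ∀ t : ℝ, (l * t / ((t : ℂ) - l)).im =
      t ^ 2 * l.im / Complex.normSq ((t:ℂ) - l) := by
    intro t
    rw [Complex.div_im]
    simp only [Complex.mul_im, Complex.mul_re, Complex.sub_re, Complex.sub_im,
      Complex.ofReal_re, Complex.ofReal_im]
    field_simp
    ring
  have hIm_int : (∫ t, l * t / ((t : ℂ) - l) ∂μ).im =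
      ∫ t, t ^ 2 * l.im / Complex.normSq ((t:ℂ) - l) ∂μ := by
    rw [integral_cim hH]
    simp_rw [him]
  have hIm_eq : l.im = z.im + γ * ∫ t, t ^ 2 * l.im / Complex.normSq ((t:ℂ) - l) ∂μ := by
    have := congrArg Complex.im heq2
    rw [Complex.add_im, Complex.mul_im] at this
    simpa [hIm_int] using this
  -- lower bound
  have hInonneg : 0 ≤ ∫ t, t ^ 2 * l.im / Complex.normSq ((t:ℂ) - l) ∂μ := by
    apply integral_nonneg
    intro t
    have := hNpos t
    positivity
  have hb1 : z.im ≤ l.im := by nlinarith [mul_nonneg hγ.le hInonneg]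
  -- upper bound
  have hm2nn : 0 ≤ ∫ t, t ^ 2 ∂μ := integral_nonneg fun t => sq_nonneg t
  have hIle : (∫ t, t ^ 2 * l.im / Complex.normSq ((t:ℂ) - l) ∂μ) ≤ (∫ t, t ^ 2 ∂μ) / l.im := by
    rw [← integral_div]
    apply integral_mono _ (hm2.div_const l.im)
    · intro t
      have hNt := hNpos t
      have hNge : l.im ^ 2 ≤ Complex.normSq ((t:ℂ) - l) := by
        rw [Complex.normSq_apply]
        simp only [Complex.sub_re, Complex.sub_im, Complex.ofReal_re, Complex.ofReal_im]
        nlinarith [sq_nonneg (t - l.re)]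
      calc t ^ 2 * l.im / Complex.normSq ((t:ℂ) - l) ≤ t ^ 2 * l.im / l.im ^ 2 := by
            gcongr <;> first | positivity | exact hNge
      _ = t ^ 2 / l.im := by field_simp
    · have := integrable_cim hH
      simp_rw [him] at this
      exact this
  have hb2 : l.im ≤ z.im / 2 + Real.sqrt (γ * (∫ t, t ^ 2 ∂μ) + z.im ^ 2 / 4) := by
    apply quad_bound hlim
    have : γ * (∫ t, t ^ 2 * l.im / Complex.normSq ((t:ℂ) - l) ∂μ) ≤
        γ * (∫ t, t ^ 2 ∂μ) / l.im := by
      rw [mul_div_assoc]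
      exact mul_le_mul_of_nonneg_left hIle hγ.le
    linarith [hIm_eq]
  -- part (c)
  have hq : 0 ≤ l.im * z.re - l.re * z.im := by
    have h5 : (l / z).im = (l.im * z.re - l.re * z.im) / Complex.normSq z := by
      rw [Complex.div_im]; ring
    rw [h5] at ha
    have hD : 0 < Complex.normSq z := Complex.normSq_pos.mpr hz0
    by_contra hcon
    push_neg at hcon
    have : (l.im * z.re - l.re * z.im) / Complex.normSq z < 0 := div_neg_of_neg_of_pos hcon hD
    linarith
  have hμae : ∀ᵐ t ∂μ, 0 ≤ t := by
    rw [ae_iff]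
    convert hμs using 2
    ext t; simp [Set.Iio]
  have hm1nn : 0 ≤ ∫ t, t ∂μ := integral_nonneg_of_ae hμae
  have hnorm_le : (∫ t, ‖l * t / ((t : ℂ) - l)‖ ∂μ) ≤
      ∫ t, ‖z‖ / z.im * t ∂μ := by
    apply integral_mono_ae hH.norm (hm1.const_mul _)
    filter_upwards [hμae] with t ht
    rw [norm_div, norm_mul]
    have hkey := key_geom hz hlim hq ht
    have habs : (0:ℝ) < ‖(t:ℂ) - l‖ := by
      rw [norm_pos_iff]; exact hne t
    rw [div_le_iff₀ habs]
    have h1 : ‖(t:ℂ)‖ = t := by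
      rw [Complex.norm_real, Real.norm_eq_abs, abs_of_nonneg ht]
    rw [h1]
    calc ‖l‖ * t = t * (‖l‖ * z.im) / z.im := by field_simp
    _ ≤ t * (‖z‖ * ‖(t:ℂ) - l‖) / z.im := by
        gcongr <;> first | exact hz.le | exact mul_le_mul_of_nonneg_left hkey ht
    _ = ‖z‖ / z.im * t * ‖(t:ℂ) - l‖ := by ring
  refine ⟨ha, ⟨hb1, hb2⟩, ?_⟩
  calc
    ‖l‖ = ‖z + γ * ∫ t, l * t / ((t : ℂ) - l) ∂μ‖ := by rw [← heq2]
    _ ≤ ‖z‖ + ‖(γ : ℂ) * ∫ t, l * t / ((t : ℂ) - l) ∂μ‖ :=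
        norm_add_le _ _
    _ = ‖z‖ + γ * ‖∫ t, l * t / ((t : ℂ) - l) ∂μ‖ := by
        rw [norm_mul, Complex.norm_real, Real.norm_eq_abs, abs_of_pos hγ]
    _ ≤ ‖z‖ + γ * ∫ t, ‖l * t / ((t : ℂ) - l)‖ ∂μ := by
        gcongr
        exact norm_integral_le_integral_norm _
    _ ≤ ‖z‖ + γ * ∫ t, ‖z‖ / z.im * t ∂μ := by gcongr
    _ = ‖z‖ + γ * (∫ t, t ∂μ) * ‖z‖ / z.im := by
        rw [integral_const_mul]
        ring
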